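/- Let h ∈ ℚ[[X]] be a formal power series with constant coefficient 1 which is even, i.e. h(−X) = h(X), and let ψ ∈ ℚ[[t]] be the unique power series with zero constant coefficient satisfying ψ'(X/h(X)) = h(X). Then ψ is odd: the coefficient of t^{2k} in ψ is 0 for every integer k ≥ 0. -/

import Mathlib

open PowerSeries
open scoped PowerSeries

/-- `psubst f g` is the formal power series `g(f)` obtained by substituting the power
series `f` (which is assumed to have zero constant coefficient) for the variable in `g`. -/
noncomputable def psubst (f g : ℚ⟦X⟧) : ℚ⟦X⟧ :=
  PowerSeries.mk fun n =>
    PowerSeries.coeff n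
      (∑ k ∈ Finset.range (n + 1), PowerSeries.C (PowerSeries.coeff k g) * f ^ k)

lemma coeff_psubst (f g : ℚ⟦X⟧) (n : ℕ) :
    PowerSeries.coeff n (psubst f g) =
      ∑ k ∈ Finset.range (n + 1),
        PowerSeries.coeff k g * PowerSeries.coeff n (f ^ k) := by
  simp [psubst, coeff_mk]

lemma psubst_rescale_left (f g : ℚ⟦X⟧) :
    psubst (PowerSeries.rescale (-1 : ℚ) f) g
      = PowerSeries.rescale (-1 : ℚ) (psubst f g) := by
  ext n
  rw [PowerSeries.coeff_rescale, coeff_psubst, coeff_psubst, Finset.mul_sum]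
  refine Finset.sum_congr rfl fun k _ => ?_
  rw [← map_pow, PowerSeries.coeff_rescale]
  ring

lemma psubst_rescale_right (f g : ℚ⟦X⟧) :
    psubst f (PowerSeries.rescale (-1 : ℚ) g) = psubst (-f) g := by
  ext n
  rw [coeff_psubst, coeff_psubst]
  refine Finset.sum_congr rfl fun k _ => ?_
  have h1 : ((-f) ^ k) = (PowerSeries.C ((-1 : ℚ) ^ k)) * f ^ k := by
    rw [neg_pow, map_pow, map_neg, map_one]
  rw [PowerSeries.coeff_rescale, h1, PowerSeries.coeff_C_mul]
  ring

lemma psubst_inj (u : ℚ⟦X⟧) (hu : PowerSeries.constantCoeff u = 1)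
    {g₁ g₂ : ℚ⟦X⟧} (hg : psubst (X * u) g₁ = psubst (X * u) g₂) : g₁ = g₂ := by
  ext n
  induction n using Nat.strong_induction_on with
  | _ n ih =>
    have hcoeff : ∀ g : ℚ⟦X⟧, PowerSeries.coeff n (psubst (X * u) g)
        = (∑ k ∈ Finset.range n,
            PowerSeries.coeff k g * PowerSeries.coeff (n - k) (u ^ k))
          + PowerSeries.coeff n g := by
      intro g
      rw [coeff_psubst, Finset.sum_range_succ]
      have hlast : PowerSeries.coeff n ((X * u) ^ n) = 1 := by
        rw [mul_pow, PowerSeries.coeff_X_pow_mul', if_pos le_rfl, Nat.sub_self,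
          PowerSeries.coeff_zero_eq_constantCoeff, map_pow, hu, one_pow]
      rw [hlast, mul_one]
      congr 1
      refine Finset.sum_congr rfl fun k hk => ?_
      have hkn : k ≤ n := le_of_lt (Finset.mem_range.mp hk)
      rw [mul_pow, PowerSeries.coeff_X_pow_mul', if_pos hkn]
    have := congrArg (PowerSeries.coeff n) hg
    rw [hcoeff, hcoeff] at this
    have hsum : ∑ k ∈ Finset.range n,
        PowerSeries.coeff k g₁ * PowerSeries.coeff (n - k) (u ^ k)
        = ∑ k ∈ Finset.range n,
            PowerSeries.coeff k g₂ * PowerSeries.coeff (n - k) (u ^ k) := by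
      refine Finset.sum_congr rfl fun k hk => ?_
      rw [ih k (Finset.mem_range.mp hk)]
    rw [hsum] at this
    exact add_left_cancel this

/-- if `h` has constant coefficient `1`, is even (`h(-X) = h(X)`), and `ψ` has
zero constant coefficient and satisfies `ψ'(X / h(X)) = h(X)`, then `ψ` is odd: all
coefficients of `t^{2k}` vanish. -/
theorem statement2 (h ψ : ℚ⟦X⟧) (hh : PowerSeries.constantCoeff h = 1)
    (heven : PowerSeries.rescale (-1 : ℚ) h = h)
    (hψ0 : PowerSeries.constantCoeff ψ = 0)
    (hψ : psubst (X * h⁻¹) (d⁄dX ℚ ψ) = h) :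
    ∀ k : ℕ, PowerSeries.coeff (2 * k) ψ = 0 := by
  have hinv1 : PowerSeries.constantCoeff h⁻¹ = 1 := by
    rw [PowerSeries.constantCoeff_inv, hh, inv_one]
  have hmul : h * h⁻¹ = 1 :=
    PowerSeries.mul_inv_cancel _ (by rw [hh]; exact one_ne_zero)
  have hrmul : h * PowerSeries.rescale (-1 : ℚ) h⁻¹ = 1 := by
    have h3 := congrArg (PowerSeries.rescale (-1 : ℚ)) hmul
    rw [map_mul, map_one, heven] at h3
    exact h3
  have hrinv : PowerSeries.rescale (-1 : ℚ) h⁻¹ = h⁻¹ := by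
    calc PowerSeries.rescale (-1 : ℚ) h⁻¹
        = (h⁻¹ * h) * PowerSeries.rescale (-1 : ℚ) h⁻¹ := by
          rw [mul_comm h⁻¹ h, hmul, one_mul]
      _ = h⁻¹ * (h * PowerSeries.rescale (-1 : ℚ) h⁻¹) := by ring
      _ = h⁻¹ := by rw [hrmul, mul_one]
  have hfodd : PowerSeries.rescale (-1 : ℚ) (X * h⁻¹) = -(X * h⁻¹) := by
    rw [map_mul, PowerSeries.rescale_neg_one_X, hrinv, neg_mul]
  have key : psubst (X * h⁻¹) (PowerSeries.rescale (-1 : ℚ) (d⁄dX ℚ ψ))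
      = psubst (X * h⁻¹) (d⁄dX ℚ ψ) := by
    rw [psubst_rescale_right, ← hfodd, psubst_rescale_left, hψ, heven]
  have key2 : PowerSeries.rescale (-1 : ℚ) (d⁄dX ℚ ψ) = d⁄dX ℚ ψ :=
    psubst_inj h⁻¹ hinv1 key
  intro k
  cases k with
  | zero =>
      simpa [PowerSeries.coeff_zero_eq_constantCoeff] using hψ0
  | succ m =>
      have hodd := congrArg (PowerSeries.coeff (2 * m + 1)) key2
      rw [PowerSeries.coeff_rescale] at hodd
      have hneg : ((-1 : ℚ)) ^ (2 * m + 1) = -1 := Odd.neg_one_pow ⟨m, by ring⟩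
      rw [hneg] at hodd
      have hzero : PowerSeries.coeff (2 * m + 1) (d⁄dX ℚ ψ) = 0 := by linarith
      rw [PowerSeries.coeff_derivative] at hzero
      have h2 : ((2 * m + 1 : ℕ) : ℚ) + 1 ≠ 0 := by push_cast; positivity
      have h4 : (((2 * m + 1 : ℕ) : ℚ) + 1) ≠ 0 := by push_cast; positivity
      have : PowerSeries.coeff (2 * m + 1 + 1) ψ = 0 :=
        (mul_eq_zero.mp hzero).resolve_right h4
      have h5 : 2 * (m + 1) = 2 * m + 1 + 1 := by omega
      rw [h5]
      exact this
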